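/- arXiv:2103.05381 — 2 statements merged into one kernel-verified Lean document; each statement's English description precedes it below -/
import Mathlib

section
/- If ρ_AB = ρ_A ⊗ ρ_B and ρ_CD = ρ_C ⊗ ρ_D are Kronecker products of density matrices ρ_A on ℂ^m, ρ_B on ℂ^n, ρ_C on ℂ^u, ρ_D on ℂ^v, then N_H^b(ρ_AB⊗ρ_CD) = 0. -/
open scoped Matrix Kronecker BigOperators ComplexOrder
open Matrix

/-- The positive-semidefinite square root of a PSD matrix (0 if not PSD). -/
noncomputable def psdSqrt {N : Type*} [Fintype N] [DecidableEq N] (A : Matrix N N ℂ) :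
    Matrix N N ℂ :=
  open scoped Classical in
  if h : A.PosSemidef then
    (h.1.eigenvectorUnitary : Matrix N N ℂ) * diagonal ((↑) ∘ (√·) ∘ h.1.eigenvalues) *
      (star h.1.eigenvectorUnitary : Matrix N N ℂ) else 0

/-- Squared Frobenius (Hilbert–Schmidt) norm: `‖X‖² = tr (Xᴴ X)`. -/
noncomputable def hsNormSq {N : Type*} [Fintype N] (X : Matrix N N ℂ) : ℝ :=
  (Matrix.trace (Xᴴ * X)).re

/-- A density matrix: positive semidefinite with unit trace. -/
def IsDensity {N : Type*} [Fintype N] [DecidableEq N] (ρ : Matrix N N ℂ) : Prop :=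
  ρ.PosSemidef ∧ ρ.trace = 1

/-- Standard inner product on `ℂ^N`. -/
noncomputable def cInner {N : Type*} [Fintype N] (x y : N → ℂ) : ℂ :=
  ∑ i, star (x i) * y i

/-- Outer product `ψ ψ†`. -/
noncomputable def outer {N : Type*} (ψ : N → ℂ) : Matrix N N ℂ :=
  Matrix.vecMulVec ψ (star ψ)

/-- The family of unit vectors of a rank-one von Neumann measurement: an orthonormal basis,
indexed by the dimension. -/
def IsVNM {N : Type*} [Fintype N] [DecidableEq N] (u : N → N → ℂ) : Prop :=
  ∀ a b, cInner (u a) (u b) = if a = b then (1 : ℂ) else 0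

/-- The rank-one projection `Π_h = u_h u_h†` of a measurement. -/
noncomputable def projOf {N : Type*} (u : N → N → ℂ) (h : N) : Matrix N N ℂ :=
  outer (u h)

/-- The measurement `{u_h u_h†}` fixes `σ`: `Σ_h Π_h σ Π_h = σ`. -/
def FixesVNM {N : Type*} [Fintype N] (u : N → N → ℂ) (σ : Matrix N N ℂ) : Prop :=
  ∑ h, projOf u h * σ * projOf u h = σ

/-- Reduced state of the second factor: `(ρ_B)_{j j'} = Σ_i ρ_{(i,j),(i,j')}`. -/
noncomputable def redB {m n : ℕ} (ρ : Matrix (Fin m × Fin n) (Fin m × Fin n) ℂ) :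
    Matrix (Fin n) (Fin n) ℂ :=
  Matrix.of fun j j' => ∑ i, ρ (i, j) (i, j')

/-- Reduced state of the first factor: `(ρ_C)_{k k'} = Σ_l ρ_{(k,l),(k',l)}`. -/
noncomputable def redC {u v : ℕ} (ρ : Matrix (Fin u × Fin v) (Fin u × Fin v) ℂ) :
    Matrix (Fin u) (Fin u) ℂ :=
  Matrix.of fun k k' => ∑ l, ρ (k, l) (k', l)

/-- `I_m ⊗ P ⊗ I_v` acting on the middle two factors. -/
noncomputable def ampMid (m v : ℕ) {n u : ℕ} (P : Matrix (Fin n × Fin u) (Fin n × Fin u) ℂ) :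
    Matrix ((Fin m × Fin n) × Fin u × Fin v) ((Fin m × Fin n) × Fin u × Fin v) ℂ :=
  Matrix.of fun p q =>
    (if p.1.1 = q.1.1 then (1 : ℂ) else 0) * P (p.1.2, p.2.1) (q.1.2, q.2.1) *
      (if p.2.2 = q.2.2 then (1 : ℂ) else 0)

/-- The map `Π^{BC}(X) = Σ_h (I_m ⊗ Π_h ⊗ I_v) X (I_m ⊗ Π_h ⊗ I_v)`. -/
noncomputable def pinchBC {m n u v : ℕ} (w : (Fin n × Fin u) → (Fin n × Fin u) → ℂ)
    (X : Matrix ((Fin m × Fin n) × Fin u × Fin v) ((Fin m × Fin n) × Fin u × Fin v) ℂ) :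
    Matrix ((Fin m × Fin n) × Fin u × Fin v) ((Fin m × Fin n) × Fin u × Fin v) ℂ :=
  ∑ h, ampMid m v (projOf w h) * X * ampMid m v (projOf w h)

/-- The measurement-induced nonbilocality `N_H^b(ρ_AB ⊗ ρ_CD)`. -/
noncomputable def NHb {m n u v : ℕ}
    (ρAB : Matrix (Fin m × Fin n) (Fin m × Fin n) ℂ)
    (ρCD : Matrix (Fin u × Fin v) (Fin u × Fin v) ℂ) : ℝ :=
  sSup { r : ℝ | ∃ w : (Fin n × Fin u) → (Fin n × Fin u) → ℂ,
    IsVNM w ∧ FixesVNM w (redB ρAB ⊗ₖ redC ρCD) ∧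
    r = hsNormSq (psdSqrt (ρAB ⊗ₖ ρCD) - pinchBC w (psdSqrt (ρAB ⊗ₖ ρCD))) }

section Aux

variable {N : Type*} [Fintype N] [DecidableEq N]

open scoped MatrixOrder

lemma sumMulVec {α : Type*} (s : Finset α) (f : α → Matrix N N ℂ) (x : N → ℂ) :
    (∑ h ∈ s, f h) *ᵥ x = ∑ h ∈ s, f h *ᵥ x := by
  ext i
  simp only [Matrix.mulVec, dotProduct, Matrix.sum_apply, Finset.sum_apply,
    Finset.sum_mul]
  exact Finset.sum_comm

lemma dotSum {α : Type*} (s : Finset α) (y : N → ℂ) (f : α → (N → ℂ)) :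
    y ⬝ᵥ (∑ h ∈ s, f h) = ∑ h ∈ s, y ⬝ᵥ f h := by
  simp only [dotProduct, Finset.sum_apply, Finset.mul_sum]
  exact Finset.sum_comm

lemma psdSqrt_of_posSemidef {A : Matrix N N ℂ} (hA : A.PosSemidef) :
    psdSqrt A = CFC.sqrt A := by
  rw [psdSqrt, dif_pos hA, CFC.sqrt_eq_cfc, cfc_nnreal_eq_real _ A hA.nonneg, hA.1.cfc_eq]
  have hf : (fun x : ℝ => ((NNReal.sqrt x.toNNReal : NNReal) : ℝ)) = fun x => √x := by
    funext x; rw [Real.coe_sqrt, Real.coe_toNNReal']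
    rcases le_total 0 x with hx | hx
    · rw [max_eq_left hx]
    · rw [max_eq_right hx, Real.sqrt_zero, Real.sqrt_eq_zero'.mpr hx]
  rw [hf]; rfl

lemma psdSqrt_eq {A T : Matrix N N ℂ} (hA : A.PosSemidef) (hT : T.PosSemidef)
    (hTT : T * T = A) : psdSqrt A = T := by
  rw [psdSqrt_of_posSemidef hA]
  exact CFC.sqrt_unique hTT hT.nonneg

lemma psdSqrt_posSemidef {A : Matrix N N ℂ} (hA : A.PosSemidef) :
    (psdSqrt A).PosSemidef := by
  rw [psdSqrt_of_posSemidef hA]; exact (CFC.sqrt_nonneg A).posSemidef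

lemma psdSqrt_mul_self {A : Matrix N N ℂ} (hA : A.PosSemidef) :
    psdSqrt A * psdSqrt A = A := by
  rw [psdSqrt_of_posSemidef hA]; exact CFC.sqrt_mul_sqrt_self A hA.nonneg

lemma kron_conjTranspose {I J : Type*} (A : Matrix I I ℂ) (B : Matrix J J ℂ) :
    (A ⊗ₖ B)ᴴ = Aᴴ ⊗ₖ Bᴴ := by
  ext ⟨i, j⟩ ⟨k, l⟩
  simp [Matrix.conjTranspose_apply]

lemma posSemidef_kron {I J : Type*} [Fintype I] [Fintype J] [DecidableEq I] [DecidableEq J]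
    {A : Matrix I I ℂ} {B : Matrix J J ℂ} (hA : A.PosSemidef) (hB : B.PosSemidef) :
    (A ⊗ₖ B).PosSemidef := by
  exact hA.kronecker hB

lemma psdSqrt_kron {I J : Type*} [Fintype I] [Fintype J] [DecidableEq I] [DecidableEq J]
    {A : Matrix I I ℂ} {B : Matrix J J ℂ} (hA : A.PosSemidef) (hB : B.PosSemidef) :
    psdSqrt (A ⊗ₖ B) = psdSqrt A ⊗ₖ psdSqrt B := by
  refine psdSqrt_eq (posSemidef_kron hA hB) (posSemidef_kron (psdSqrt_posSemidef hA) (psdSqrt_posSemidef hB)) ?_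
  rw [← Matrix.mul_kronecker_mul, psdSqrt_mul_self hA, psdSqrt_mul_self hB]

lemma outer_apply {ψ : N → ℂ} (i j : N) : outer ψ i j = ψ i * star (ψ j) := rfl

lemma proj_mul_proj {w : N → N → ℂ} (hw : IsVNM w) (g h : N) :
    projOf w g * projOf w h = if g = h then projOf w h else 0 := by
  have key : ∀ i j, (projOf w g * projOf w h) i j
      = cInner (w g) (w h) * (w g i * star (w h j)) := by
    intro i j
    simp only [projOf, outer, Matrix.mul_apply, Matrix.vecMulVec_apply, Pi.star_apply,
      cInner, Finset.sum_mul, Finset.mul_sum]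
    apply Finset.sum_congr rfl
    intro k _
    ring
  ext i j
  rw [key, hw g h]
  by_cases hgh : g = h
  · subst hgh; simp [projOf, outer, Matrix.vecMulVec_apply]
  · simp [hgh]

lemma proj_conj_self {w : N → N → ℂ} {S : Matrix N N ℂ} (h : N) :
    projOf w h * S * projOf w h = (star (w h) ⬝ᵥ S *ᵥ w h) • projOf w h := by
  ext i j
  simp only [projOf, outer, Matrix.mul_apply, Matrix.vecMulVec_apply, Pi.star_apply,
    Matrix.smul_apply, dotProduct, Matrix.mulVec, smul_eq_mul,
    Finset.sum_mul, Finset.mul_sum]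
  rw [Finset.sum_comm]
  apply Finset.sum_congr rfl
  intro k _
  apply Finset.sum_congr rfl
  intro l _
  ring

lemma sum_proj_eq_one {w : N → N → ℂ} (hw : IsVNM w) :
    ∑ h, projOf w h = (1 : Matrix N N ℂ) := by
  set V : Matrix N N ℂ := Matrix.of fun i h => w h i with hV
  have h1 : Vᴴ * V = 1 := by
    ext a b
    have := hw a b
    simpa [Matrix.mul_apply, Matrix.conjTranspose_apply, hV, cInner,
      Matrix.one_apply] using this
  have h2 : V * Vᴴ = 1 := mul_eq_one_comm.mp h1
  ext i j
  have := congrFun (congrFun (congrArg (fun M => (M : Matrix N N ℂ)) h2) i) j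
  simpa [Matrix.mul_apply, Matrix.conjTranspose_apply, hV, projOf, outer,
    Matrix.vecMulVec_apply, Matrix.sum_apply, Matrix.one_apply] using this

lemma fixes_psdSqrt {w : N → N → ℂ} (hw : IsVNM w) {S : Matrix N N ℂ}
    (hS : S.PosSemidef) (hfix : FixesVNM w S) : FixesVNM w (psdSqrt S) := by
  set c : N → ℂ := fun h => star (w h) ⬝ᵥ S *ᵥ w h with hc
  have hc_nonneg : ∀ h, (0 : ℂ) ≤ c h := fun h => hS.dotProduct_mulVec_nonneg (w h)
  have hc_re : ∀ h, c h = ((c h).re : ℂ) := by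
    intro h
    have := (Complex.nonneg_iff.mp (hc_nonneg h)).2
    exact Complex.ext rfl (by simp [this])
  have hc_re_nonneg : ∀ h, 0 ≤ (c h).re := fun h => (Complex.nonneg_iff.mp (hc_nonneg h)).1
  have hSdiag : S = ∑ h, c h • projOf w h := by
    conv_lhs => rw [← hfix]
    exact Finset.sum_congr rfl fun h _ => proj_conj_self h
  set r : N → ℝ := fun h => Real.sqrt ((c h).re) with hr
  set T : Matrix N N ℂ := ∑ h, (r h : ℂ) • projOf w h with hT
  -- T is PSD
  have houter_psd : ∀ h : N, (projOf w h).PosSemidef := by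
    intro h
    refine Matrix.PosSemidef.of_dotProduct_mulVec_nonneg ?_ ?_
    · ext i j
      simp [projOf, outer, Matrix.conjTranspose_apply, Matrix.vecMulVec_apply, mul_comm]
    · intro x
      have : star x ⬝ᵥ projOf w h *ᵥ x = star (cInner (w h) x) * cInner (w h) x := by
        simp only [projOf, outer, dotProduct, Matrix.mulVec, Matrix.vecMulVec_apply,
          Pi.star_apply, cInner, star_sum, star_mul', star_star, Finset.sum_mul,
          Finset.mul_sum]
        rw [Finset.sum_comm]
        apply Finset.sum_congr rfl
        intro k _
        apply Finset.sum_congr rfl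
        intro l _
        ring
      rw [this]
      exact star_mul_self_nonneg _
  have hT_psd : T.PosSemidef := by
    refine Matrix.PosSemidef.of_dotProduct_mulVec_nonneg ?_ ?_
    · show Tᴴ = T
      rw [hT, Matrix.conjTranspose_sum]
      apply Finset.sum_congr rfl
      intro h _
      rw [Matrix.conjTranspose_smul, (houter_psd h).1]
      simp
    · intro x
      have expand : star x ⬝ᵥ T *ᵥ x = ∑ h, (r h : ℂ) * (star x ⬝ᵥ projOf w h *ᵥ x) := by
        rw [hT, sumMulVec, dotSum]
        apply Finset.sum_congr rfl
        intro h _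
        rw [Matrix.smul_mulVec, dotProduct_smul, smul_eq_mul]
      rw [expand]
      apply Finset.sum_nonneg
      intro h _
      have h1 : (0:ℂ) ≤ (r h : ℂ) := by
        rw [Complex.zero_le_real]
        exact Real.sqrt_nonneg _
      have h2 := (houter_psd h).dotProduct_mulVec_nonneg x
      exact mul_nonneg h1 h2
  have hTT : T * T = S := by
    rw [hT, Finset.sum_mul_sum]
    have : ∀ g ∈ Finset.univ, ∀ h ∈ Finset.univ,
        ((r g : ℂ) • projOf w g) * ((r h : ℂ) • projOf w h)
        = if g = h then ((r h : ℂ) * (r h : ℂ)) • projOf w h else 0 := by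
      intro g _ h _
      by_cases hgh : g = h
      · subst hgh
        rw [Matrix.smul_mul, Matrix.mul_smul, proj_mul_proj hw, if_pos rfl, if_pos rfl,
          smul_smul]
      · rw [Matrix.smul_mul, Matrix.mul_smul, proj_mul_proj hw, if_neg hgh, if_neg hgh,
          smul_zero, smul_zero]
    rw [Finset.sum_congr rfl fun g hg => Finset.sum_congr rfl (this g hg)]
    simp only [Finset.sum_ite_eq, Finset.mem_univ, if_true]
    rw [hSdiag]
    apply Finset.sum_congr rfl
    intro h _
    congr 1
    rw [← Complex.ofReal_mul, Real.mul_self_sqrt (hc_re_nonneg h), ← hc_re h]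
  have hsq : psdSqrt S = T := psdSqrt_eq hS hT_psd hTT
  rw [hsq]
  unfold FixesVNM
  rw [hT]
  have key : ∀ g : N, projOf w g * (∑ h, (r h : ℂ) • projOf w h) * projOf w g
      = (r g : ℂ) • projOf w g := by
    intro g
    rw [Finset.mul_sum, Finset.sum_mul]
    have : ∀ h ∈ Finset.univ, projOf w g * ((r h : ℂ) • projOf w h) * projOf w g
        = if h = g then (r g : ℂ) • projOf w g else 0 := by
      intro h _
      by_cases hgh : g = h
      · subst hgh
        rw [Matrix.mul_smul, Matrix.smul_mul, proj_mul_proj hw, if_pos rfl,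
          proj_mul_proj hw, if_pos rfl, if_pos rfl]
      · rw [Matrix.mul_smul, Matrix.smul_mul, proj_mul_proj hw, if_neg hgh, Matrix.zero_mul,
          smul_zero, if_neg (Ne.symm hgh)]
    rw [Finset.sum_congr rfl this]
    simp
  exact Finset.sum_congr rfl fun g _ => key g

end Aux

noncomputable def sandwich {m n u v : ℕ} (A : Matrix (Fin m) (Fin m) ℂ)
    (X : Matrix (Fin n × Fin u) (Fin n × Fin u) ℂ) (D : Matrix (Fin v) (Fin v) ℂ) :
    Matrix ((Fin m × Fin n) × Fin u × Fin v) ((Fin m × Fin n) × Fin u × Fin v) ℂ :=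
  Matrix.of fun p q => A p.1.1 q.1.1 * X (p.1.2, p.2.1) (q.1.2, q.2.1) * D p.2.2 q.2.2

lemma ampMid_sandwich {m n u v : ℕ} (A : Matrix (Fin m) (Fin m) ℂ)
    (X P Q : Matrix (Fin n × Fin u) (Fin n × Fin u) ℂ) (D : Matrix (Fin v) (Fin v) ℂ) :
    ampMid m v P * sandwich A X D * ampMid m v Q = sandwich A (P * X * Q) D := by
  ext ⟨⟨i, j⟩, k, l⟩ ⟨⟨i', j'⟩, k', l'⟩
  simp only [sandwich, ampMid, Matrix.mul_apply, Matrix.of_apply, Fintype.sum_prod_type,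
    ite_mul, mul_ite, one_mul, mul_one, zero_mul, mul_zero, Finset.sum_ite_irrel,
    Finset.sum_const_zero, Finset.sum_ite_eq, Finset.sum_ite_eq', Finset.mem_univ, if_true]
  simp only [Finset.sum_mul, Finset.mul_sum]
  apply Finset.sum_congr rfl; intro a _
  apply Finset.sum_congr rfl; intro b _
  apply Finset.sum_congr rfl; intro c _
  apply Finset.sum_congr rfl; intro d _
  ring

lemma sandwich_sum {m n u v : ℕ} {α : Type*} (s : Finset α) (A : Matrix (Fin m) (Fin m) ℂ)
    (f : α → Matrix (Fin n × Fin u) (Fin n × Fin u) ℂ) (D : Matrix (Fin v) (Fin v) ℂ) :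
    sandwich A (∑ h ∈ s, f h) D = ∑ h ∈ s, sandwich A (f h) D := by
  ext p q
  simp [sandwich, Matrix.sum_apply, Finset.sum_mul, Finset.mul_sum]

lemma pinch_sandwich {m n u v : ℕ} (w : (Fin n × Fin u) → (Fin n × Fin u) → ℂ)
    (A : Matrix (Fin m) (Fin m) ℂ) (X : Matrix (Fin n × Fin u) (Fin n × Fin u) ℂ)
    (D : Matrix (Fin v) (Fin v) ℂ) (hX : FixesVNM w X) :
    pinchBC w (sandwich A X D) = sandwich A X D := by
  unfold pinchBC
  have : ∀ h, ampMid m v (projOf w h) * sandwich A X D * ampMid m v (projOf w h)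
      = sandwich A (projOf w h * X * projOf w h) D := fun h => ampMid_sandwich A X _ _ D
  rw [Finset.sum_congr rfl fun h _ => this h, ← sandwich_sum, hX]

lemma redB_kron {m n : ℕ} (ρA : Matrix (Fin m) (Fin m) ℂ) (ρB : Matrix (Fin n) (Fin n) ℂ)
    (hA : ρA.trace = 1) : redB (ρA ⊗ₖ ρB) = ρB := by
  ext j j'
  simp only [redB, Matrix.of_apply, Matrix.kroneckerMap_apply]
  rw [← Finset.sum_mul]
  have : ∑ i, ρA i i = 1 := hA
  rw [this, one_mul]

lemma redC_kron {u v : ℕ} (ρC : Matrix (Fin u) (Fin u) ℂ) (ρD : Matrix (Fin v) (Fin v) ℂ)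
    (hD : ρD.trace = 1) : redC (ρC ⊗ₖ ρD) = ρC := by
  ext k k'
  simp only [redC, Matrix.of_apply, Matrix.kroneckerMap_apply]
  rw [← Finset.mul_sum]
  have : ∑ l, ρD l l = 1 := hD
  rw [this, mul_one]

lemma psdSqrt_quad {m n u v : ℕ}
    {ρA : Matrix (Fin m) (Fin m) ℂ} {ρB : Matrix (Fin n) (Fin n) ℂ}
    {ρC : Matrix (Fin u) (Fin u) ℂ} {ρD : Matrix (Fin v) (Fin v) ℂ}
    (hA : ρA.PosSemidef) (hB : ρB.PosSemidef) (hC : ρC.PosSemidef) (hD : ρD.PosSemidef) :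
    psdSqrt ((ρA ⊗ₖ ρB) ⊗ₖ (ρC ⊗ₖ ρD))
      = sandwich (psdSqrt ρA) (psdSqrt (ρB ⊗ₖ ρC)) (psdSqrt ρD) := by
  rw [psdSqrt_kron (posSemidef_kron hA hB) (posSemidef_kron hC hD), psdSqrt_kron hA hB,
    psdSqrt_kron hC hD, psdSqrt_kron hB hC]
  ext ⟨⟨i, j⟩, k, l⟩ ⟨⟨i', j'⟩, k', l'⟩
  simp only [sandwich, Matrix.kroneckerMap_apply, Matrix.of_apply]
  ring


/-- For product inputs `ρ_AB = ρ_A ⊗ ρ_B`, `ρ_CD = ρ_C ⊗ ρ_D`,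
the nonbilocality vanishes. -/
theorem stmt5 {m n u v : ℕ}
    (ρA : Matrix (Fin m) (Fin m) ℂ) (ρB : Matrix (Fin n) (Fin n) ℂ)
    (ρC : Matrix (Fin u) (Fin u) ℂ) (ρD : Matrix (Fin v) (Fin v) ℂ)
    (hA : IsDensity ρA) (hB : IsDensity ρB) (hC : IsDensity ρC) (hD : IsDensity ρD) :
    NHb (ρA ⊗ₖ ρB) (ρC ⊗ₖ ρD) = 0 := by
  unfold NHb
  set s : Set ℝ := { r : ℝ | ∃ w : (Fin n × Fin u) → (Fin n × Fin u) → ℂ,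
    IsVNM w ∧ FixesVNM w (redB (ρA ⊗ₖ ρB) ⊗ₖ redC (ρC ⊗ₖ ρD)) ∧
    r = hsNormSq (psdSqrt ((ρA ⊗ₖ ρB) ⊗ₖ (ρC ⊗ₖ ρD))
      - pinchBC w (psdSqrt ((ρA ⊗ₖ ρB) ⊗ₖ (ρC ⊗ₖ ρD)))) } with hs
  have hsub : s ⊆ {0} := by
    rintro r ⟨w, hw, hfix, rfl⟩
    rw [redB_kron ρA ρB hA.2, redC_kron ρC ρD hD.2] at hfix
    have hBC : (ρB ⊗ₖ ρC).PosSemidef := posSemidef_kron hB.1 hC.1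
    have hfix' : FixesVNM w (psdSqrt (ρB ⊗ₖ ρC)) := fixes_psdSqrt hw hBC hfix
    have hsq := psdSqrt_quad hA.1 hB.1 hC.1 hD.1
    have hpinch : pinchBC w (psdSqrt ((ρA ⊗ₖ ρB) ⊗ₖ (ρC ⊗ₖ ρD)))
        = psdSqrt ((ρA ⊗ₖ ρB) ⊗ₖ (ρC ⊗ₖ ρD)) := by
      rw [hsq]
      exact pinch_sandwich w _ _ _ hfix'
    rw [hpinch, sub_self]
    simp [hsNormSq]
  rcases Set.eq_empty_or_nonempty s with he | hne
  · rw [he, Real.sSup_empty]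
  · have : s = {0} := (Set.Nonempty.subset_singleton_iff hne).mp hsub
    rw [this, csSup_singleton]
end

section
/- Let σ be a positive-semidefinite N×N complex matrix whose N eigenvalues are pairwise distinct, and let (v_s)_{s∈Fin N} be an orthonormal eigenbasis of σ. If a rank-one von Neumann measurement {Π_h = u_h u_h†}_{h∈Fin N} fixes σ, i.e. Σ_h Π_h σ Π_h = σ, then there is a permutation π of Fin N such that u_h u_h† = v_{π(h)} v_{π(h)}† for every h; in particular the measurement projections are exactly the spectral projections of σ. -/
open scoped Matrix Kronecker BigOperators ComplexOrder
open Matrix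

section Stmt7Aux

open Matrix
variable {N : ℕ}

private lemma stmt7_sum_mulVec (f : Fin N → Matrix (Fin N) (Fin N) ℂ) (x : Fin N → ℂ) :
    (∑ h, f h) *ᵥ x = ∑ h, f h *ᵥ x := by
  ext i
  simp only [Matrix.mulVec, dotProduct, Matrix.sum_apply, Finset.sum_apply, Finset.sum_mul]
  rw [Finset.sum_comm]

private lemma stmt7_outer_mulVec (ψ x : Fin N → ℂ) : outer ψ *ᵥ x = cInner ψ x • ψ := by
  ext i
  simp only [outer, Matrix.mulVec, Matrix.vecMulVec_apply, dotProduct, cInner,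
    Pi.smul_apply, smul_eq_mul, Pi.star_apply, Finset.sum_mul]
  exact Finset.sum_congr rfl fun j _ => by ring

private lemma stmt7_cInner_smul_smul (a b : ℂ) (x y : Fin N → ℂ) :
    cInner (a • x) (b • y) = star a * b * cInner x y := by
  simp only [cInner, Pi.smul_apply, smul_eq_mul, star_mul', Finset.mul_sum]
  exact Finset.sum_congr rfl fun j _ => by ring

private lemma stmt7_cInner_smul_right (a : ℂ) (x y : Fin N → ℂ) :
    cInner x (a • y) = a * cInner x y := by
  simp only [cInner, Pi.smul_apply, smul_eq_mul, Finset.mul_sum]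
  exact Finset.sum_congr rfl fun j _ => by ring

private lemma stmt7_eigen (σ : Matrix (Fin N) (Fin N) ℂ)
    (u : Fin N → Fin N → ℂ) (hu : IsVNM u) (hfix : FixesVNM u σ) (k : Fin N) :
    σ *ᵥ u k = cInner (u k) (σ *ᵥ u k) • u k := by
  conv_lhs => rw [← hfix]
  rw [stmt7_sum_mulVec]
  have hterm : ∀ h, (projOf u h * σ * projOf u h) *ᵥ u k
      = if h = k then cInner (u k) (σ *ᵥ u k) • u k else 0 := by
    intro h
    rw [← Matrix.mulVec_mulVec, ← Matrix.mulVec_mulVec]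
    rw [show projOf u h *ᵥ u k = cInner (u h) (u k) • u h from stmt7_outer_mulVec _ _,
      hu h k]
    by_cases hh : h = k
    · subst hh
      simp only [↓reduceIte, one_smul]
      exact stmt7_outer_mulVec _ _
    · simp [if_neg hh]
  simp only [hterm]
  simp

private lemma stmt7_herm (σ : Matrix (Fin N) (Fin N) ℂ) (hσ : σ.PosSemidef)
    (dvals : Fin N → ℝ) (v : Fin N → Fin N → ℂ)
    (heig : ∀ s, σ *ᵥ v s = (dvals s : ℂ) • v s) (s : Fin N) (x : Fin N → ℂ) :
    cInner (v s) (σ *ᵥ x) = (dvals s : ℂ) * cInner (v s) x := by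
  have hherm : σᴴ = σ := hσ.1
  have hj : ∀ j, ∑ i, star (v s i) * σ i j = (dvals s : ℂ) * star (v s j) := by
    intro j
    have h2 : ∑ i, σᴴ j i * v s i = (dvals s : ℂ) * v s j := by
      rw [hherm]
      simpa [Matrix.mulVec, dotProduct] using congrFun (heig s) j
    calc ∑ i, star (v s i) * σ i j = star (∑ i, σᴴ j i * v s i) := by
          simp only [star_sum, star_mul', Matrix.conjTranspose_apply, star_star]
          exact Finset.sum_congr rfl fun i _ => by ring
      _ = (dvals s : ℂ) * star (v s j) := by
          rw [h2]; simp
  calc cInner (v s) (σ *ᵥ x) = ∑ j, (∑ i, star (v s i) * σ i j) * x j := by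
        simp only [cInner, Matrix.mulVec, dotProduct, Finset.mul_sum, Finset.sum_mul]
        rw [Finset.sum_comm]
        exact Finset.sum_congr rfl fun j _ => Finset.sum_congr rfl fun i _ => by ring
    _ = (dvals s : ℂ) * cInner (v s) x := by
        simp only [hj, cInner, Finset.mul_sum]
        exact Finset.sum_congr rfl fun j _ => by ring

private lemma stmt7_complete (v : Fin N → Fin N → ℂ) (hv : IsVNM v) (x : Fin N → ℂ) :
    ∑ s, cInner (v s) x • v s = x := by
  classical
  set V : Matrix (Fin N) (Fin N) ℂ := Matrix.of fun i s => v s i with hV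
  have hVV : Vᴴ * V = 1 := by
    ext s t
    simpa [Matrix.mul_apply, Matrix.conjTranspose_apply, hV, cInner, Matrix.one_apply]
      using hv s t
  have hVV' : V * Vᴴ = 1 := mul_eq_one_comm.mp hVV
  have hsum : ∑ s, outer (v s) = (1 : Matrix (Fin N) (Fin N) ℂ) := by
    rw [← hVV']
    ext i j
    simp [Matrix.sum_apply, outer, Matrix.vecMulVec_apply, Matrix.mul_apply, hV]
  calc ∑ s, cInner (v s) x • v s = ∑ s, outer (v s) *ᵥ x := by
        simp [stmt7_outer_mulVec]
    _ = (∑ s, outer (v s)) *ᵥ x := (stmt7_sum_mulVec _ _).symm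
    _ = x := by rw [hsum]; simp

end Stmt7Aux

/-- If σ is PSD with pairwise distinct eigenvalues and a rank-one von Neumann
measurement fixes σ, then its projections are exactly the spectral projections of σ, up to
a permutation. -/

theorem stmt7 {N : ℕ} (σ : Matrix (Fin N) (Fin N) ℂ) (hσ : σ.PosSemidef)
    (dvals : Fin N → ℝ) (hdist : Function.Injective dvals)
    (v : Fin N → Fin N → ℂ) (hv : IsVNM v)
    (heig : ∀ s, σ *ᵥ v s = (dvals s : ℂ) • v s)
    (u : Fin N → Fin N → ℂ) (hu : IsVNM u) (hfix : FixesVNM u σ) :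
    ∃ π : Equiv.Perm (Fin N), ∀ h, projOf u h = projOf v (π h) := by
  classical
  have key : ∀ k, σ *ᵥ u k = cInner (u k) (σ *ᵥ u k) • u k :=
    stmt7_eigen σ u hu hfix
  have hcoef : ∀ k s,
      ((dvals s : ℂ) - cInner (u k) (σ *ᵥ u k)) * cInner (v s) (u k) = 0 := by
    intro k s
    have h1 := stmt7_herm σ hσ dvals v heig s (u k)
    have h2 : cInner (v s) (σ *ᵥ u k)
        = cInner (u k) (σ *ᵥ u k) * cInner (v s) (u k) := by
      conv_lhs => rw [key k]
      exact stmt7_cInner_smul_right _ _ _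
    rw [h2] at h1
    linear_combination -h1
  have hone : ∀ k, cInner (u k) (u k) = 1 := by
    intro k; simpa using hu k k
  have hne : ∀ k, ∃ s, cInner (v s) (u k) ≠ 0 := by
    intro k
    by_contra hcon
    push_neg at hcon
    have h0 : u k = 0 := by
      rw [← stmt7_complete v hv (u k)]
      simp [hcon]
    have h1 := hone k
    rw [h0] at h1
    simp [cInner] at h1
  choose f hf using hne
  have heq : ∀ k, cInner (u k) (σ *ᵥ u k) = (dvals (f k) : ℂ) := by
    intro k
    rcases mul_eq_zero.mp (hcoef k (f k)) with h | h
    · exact (sub_eq_zero.mp h).symm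
    · exact absurd h (hf k)
  have huniq : ∀ k s, cInner (v s) (u k) ≠ 0 → s = f k := by
    intro k s hs
    rcases mul_eq_zero.mp (hcoef k s) with h | h
    · have h3 : (dvals s : ℂ) = (dvals (f k) : ℂ) := by
        rw [sub_eq_zero.mp h, heq k]
      exact hdist (Complex.ofReal_inj.mp h3)
    · exact absurd h hs
  have hrep : ∀ k, u k = cInner (v (f k)) (u k) • v (f k) := by
    intro k
    conv_lhs => rw [← stmt7_complete v hv (u k)]
    refine Finset.sum_eq_single _ (fun s _ hs => ?_) (fun hmem => absurd (Finset.mem_univ _) hmem)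
    have h0 : cInner (v s) (u k) = 0 := by
      by_contra hc0
      exact hs (huniq k s hc0)
    simp [h0]
  have hinj : Function.Injective f := by
    intro k k' hkk
    by_contra hne'
    have h1 : cInner (u k) (u k') = 0 := by
      rw [hu k k', if_neg hne']
    rw [hrep k, hrep k', hkk, stmt7_cInner_smul_smul, hv (f k') (f k'), if_pos rfl,
      mul_one] at h1
    rcases mul_eq_zero.mp h1 with h | h
    · have := hf k
      rw [hkk] at this
      exact this (star_eq_zero.mp h)
    · exact hf k' h
  refine ⟨Equiv.ofBijective f (Finite.injective_iff_bijective.mp hinj), fun k => ?_⟩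
  have ha : star (cInner (v (f k)) (u k)) * cInner (v (f k)) (u k) = 1 := by
    have h1 := hone k
    rw [hrep k, stmt7_cInner_smul_smul, hv (f k) (f k), if_pos rfl, mul_one] at h1
    exact h1
  show projOf u k = projOf v (f k)
  ext i j
  simp only [projOf, outer, Matrix.vecMulVec_apply, Pi.star_apply]
  rw [show u k i = (cInner (v (f k)) (u k) • v (f k)) i from by rw [← hrep k],
    show u k j = (cInner (v (f k)) (u k) • v (f k)) j from by rw [← hrep k]]
  simp only [Pi.smul_apply, smul_eq_mul, star_mul']
  linear_combination (v (f k) i * star (v (f k) j)) * ha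
end
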